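/- arXiv:2103.06715 — 8 statements merged into one kernel-verified Lean document; each statement's English description precedes it below -/
import Mathlib

section
/- Every level is both potent and transitive (i.e. every member of a level is a subset of that level). -/
def pot (a : ZFSet) : ZFSet :=
  ZFSet.sep (fun x => ∃ c ∈ a, x ⊆ c) (ZFSet.powerset (ZFSet.sUnion a))

def Potent (a : ZFSet) : Prop := ∀ x, (∃ c, x ⊆ c ∧ c ∈ a) → x ∈ a

def IsHistory (h : ZFSet) : Prop := ∀ x ∈ h, x = pot (x ∩ h)

def IsLevel (s : ZFSet) : Prop := ∃ h, IsHistory h ∧ s = pot h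

lemma mem_pot {x a : ZFSet} : x ∈ pot a ↔ ∃ c ∈ a, x ⊆ c := by
  simp only [pot, ZFSet.mem_sep, ZFSet.mem_powerset]
  constructor
  · rintro ⟨-, h⟩; exact h
  · rintro ⟨c, hc, hxc⟩
    refine ⟨fun y hy => ?_, c, hc, hxc⟩
    exact ZFSet.mem_sUnion.2 ⟨c, hc, hxc hy⟩

theorem stmt2 (s : ZFSet) (hs : IsLevel s) : Potent s ∧ ∀ x ∈ s, x ⊆ s := by
  obtain ⟨h, hh, rfl⟩ := hs
  constructor
  · rintro x ⟨c, hxc, hc⟩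
    obtain ⟨d, hd, hcd⟩ := mem_pot.1 hc
    exact mem_pot.2 ⟨d, hd, hxc.trans hcd⟩
  · intro x hx y hy
    obtain ⟨c, hc, hxc⟩ := mem_pot.1 hx
    have := hh c hc
    have hy' : y ∈ pot (c ∩ h) := this ▸ hxc hy
    obtain ⟨d, hd, hyd⟩ := mem_pot.1 hy'
    exact mem_pot.2 ⟨d, (ZFSet.mem_inter.1 hd).2, hyd⟩
end

section
/- If F is a class (predicate on sets) such that some set satisfies F and every set satisfying F is potent, then there is an ∈-minimal set satisfying F: some a with F(a) such that no x with F(x) has x ∈ a. (This is proved without using Foundation, via a Russell-style set d = {x ∈ c : x ∉ x}.) -/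
theorem stmt3 (F : ZFSet → Prop) (hne : ∃ x, F x) (hpot : ∀ x, F x → Potent x) :
    ∃ a, F a ∧ ∀ x, F x → x ∉ a := by
  by_contra h
  push_neg at h
  obtain ⟨c, hc⟩ := hne
  set d := ZFSet.sep (fun x => (∀ b, F b → x ∈ b) ∧ x ∉ x) c with hd
  have sub : ∀ b, F b → d ⊆ b := fun b hb x hx => (ZFSet.mem_sep.1 hx).2.1 b hb
  have mem : ∀ b, F b → d ∈ b := by
    intro b hb
    obtain ⟨x, hx, hxb⟩ := h b hb
    exact hpot b hb d ⟨x, sub x hx, hxb⟩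
  have key : d ∈ d ↔ d ∉ d := by
    constructor
    · intro hdd
      exact fun _ => (ZFSet.mem_sep.1 hdd).2.2 hdd
    · intro hdd
      exact ZFSet.mem_sep.2 ⟨mem c hc, mem, hdd⟩
  exact (iff_not_self key).elim
end

section
/- Every member of a history is a level. -/
lemma hist_trans (h : ZFSet) (hh : IsHistory h) :
    ∀ x, x ∈ h → ∀ u v : ZFSet, u ∈ v → v ∈ x → u ∈ x := by
  intro x
  induction x using ZFSet.inductionOn with
  | _ x ih =>
    intro hx u v huv hvx
    have hx' := hh x hx
    rw [hx'] at hvx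
    obtain ⟨d, hd, hvd⟩ := mem_pot.1 hvx
    rw [ZFSet.mem_inter] at hd
    have hud : u ∈ d := hvd huv
    have hd' := hh d hd.2
    rw [hd'] at hud
    obtain ⟨e, he, hue⟩ := mem_pot.1 hud
    rw [ZFSet.mem_inter] at he
    -- d is transitive by induction hypothesis, so e ⊆ d
    have hed : e ⊆ d := fun z hz => ih d hd.1 hd.2 z e hz he.1
    rw [hx', mem_pot]
    exact ⟨d, ZFSet.mem_inter.2 hd, fun z hz => hed (hue hz)⟩

theorem stmt4 (h : ZFSet) (hh : IsHistory h) : ∀ x ∈ h, IsLevel x := by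
  intro x hx
  refine ⟨x ∩ h, ?_, ?_⟩
  · intro y hy
    rw [ZFSet.mem_inter] at hy
    have hy' := hh y hy.2
    have : y ∩ h = y ∩ (x ∩ h) := by
      apply ZFSet.ext
      intro z
      simp only [ZFSet.mem_inter]
      constructor
      · rintro ⟨hzy, hzh⟩
        exact ⟨hzy, hist_trans h hh x hx z y hzy hy.1, hzh⟩
      · rintro ⟨hzy, -, hzh⟩; exact ⟨hzy, hzh⟩
    rwa [this] at hy'
  · exact hh x hx
end

section
/- Any two levels are comparable under membership: if s and t are levels, then s ∈ t or s = t or t ∈ s. -/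
lemma pot_mono {a b : ZFSet} (hab : a ⊆ b) : pot a ⊆ pot b := by
  intro x hx
  rcases mem_pot.1 hx with ⟨c, hc, hxc⟩
  exact mem_pot.2 ⟨c, hab hc, hxc⟩

lemma level_potent {s : ZFSet} (hs : IsLevel s) {x y : ZFSet} (hxy : x ⊆ y) (hy : y ∈ s) :
    x ∈ s := by
  rcases hs with ⟨h, -, rfl⟩
  rcases mem_pot.1 hy with ⟨c, hc, hyc⟩
  exact mem_pot.2 ⟨c, hc, hxy.trans hyc⟩

/-- Members of histories are transitive. -/
lemma hist_mem_trans (a : ZFSet) : ∀ h : ZFSet, IsHistory h → a ∈ h → ∀ y ∈ a, y ⊆ a := by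
  induction a using ZFSet.inductionOn with
  | _ a IH =>
    intro h hh ha y hy z hz
    have hae : a = pot (a ∩ h) := hh a ha
    rcases mem_pot.1 (hae ▸ hy) with ⟨e, he, hye⟩
    have heh : e ∈ h := (ZFSet.mem_inter.1 he).2
    have hea : e ∈ a := (ZFSet.mem_inter.1 he).1
    have hze : z ∈ e := hye hz
    have : z ⊆ e := IH e hea h hh heh z hze
    rw [hae]
    exact mem_pot.2 ⟨e, he, this⟩

lemma level_trans {s : ZFSet} (hs : IsLevel s) {y : ZFSet} (hy : y ∈ s) : y ⊆ s := by
  rcases hs with ⟨h, hh, rfl⟩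
  rcases mem_pot.1 hy with ⟨c, hc, hyc⟩
  intro z hz
  have hzc : z ∈ c := hyc hz
  have := hh c hc
  rcases mem_pot.1 (this ▸ hzc) with ⟨f, hf, hzf⟩
  exact mem_pot.2 ⟨f, (ZFSet.mem_inter.1 hf).2, hzf⟩

/-- Members of histories are levels. -/
lemma hist_mem_level {h a : ZFSet} (hh : IsHistory h) (ha : a ∈ h) : IsLevel a := by
  refine ⟨a ∩ h, ?_, hh a ha⟩
  intro x hx
  have hxa : x ∈ a := (ZFSet.mem_inter.1 hx).1
  have hxh : x ∈ h := (ZFSet.mem_inter.1 hx).2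
  have hx' : x = pot (x ∩ h) := hh x hxh
  have hxs : x ⊆ a := hist_mem_trans a h hh ha x hxa
  have : x ∩ h = x ∩ (a ∩ h) := by
    apply ZFSet.ext
    intro z
    simp only [ZFSet.mem_inter]
    constructor
    · rintro ⟨hzx, hzh⟩; exact ⟨hzx, hxs hzx, hzh⟩
    · rintro ⟨hzx, -, hzh⟩; exact ⟨hzx, hzh⟩
  rw [this] at hx'
  exact hx'

/-- Every member of a level is contained in a level that is a member of that level. -/
lemma mem_level_sub {s x : ZFSet} (hs : IsLevel s) (hx : x ∈ s) :
    ∃ r, IsLevel r ∧ r ∈ s ∧ x ⊆ r := by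
  obtain ⟨h, hh, rfl⟩ := hs
  rcases mem_pot.1 hx with ⟨c, hc, hxc⟩
  exact ⟨c, hist_mem_level hh hc, mem_pot.2 ⟨c, hc, fun z hz => hz⟩, hxc⟩

lemma main (s : ZFSet) : IsLevel s → ∀ t : ZFSet, IsLevel t →
    ((t ⊆ s ∧ t ≠ s) → t ∈ s) ∧ (s ⊆ t ∨ t ⊆ s) := by
  induction s using ZFSet.inductionOn with
  | _ s IH =>
    intro hs t ht
    constructor
    · -- proper sub-levels are members
      rintro ⟨hts, htne⟩
      obtain ⟨h, hh, hse⟩ := hs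
      -- find minimal c ∈ h with c ∉ t
      set D := ZFSet.sep (fun c => c ∉ t) h with hD
      have hDne : D ≠ ∅ := by
        intro hDe
        apply htne
        apply (ZFSet.ext_iff.mpr ?_).symm
        intro z
        constructor
        · intro hz
          rcases mem_pot.1 (hse ▸ hz) with ⟨c, hc, hzc⟩
          have hct : c ∈ t := by
            by_contra hct
            exact ZFSet.notMem_empty c (hDe ▸ ZFSet.mem_sep.2 ⟨hc, hct⟩)
          exact level_potent ht hzc hct
        · exact fun hz => hts hz
      rcases ZFSet.regularity D hDne with ⟨c, hcD, hmin⟩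
      have hch : c ∈ h := (ZFSet.mem_sep.1 hcD).1
      have hct : c ∉ t := (ZFSet.mem_sep.1 hcD).2
      have hcs : c ∈ s := hse ▸ mem_pot.2 ⟨c, hch, fun z hz => hz⟩
      have hclev : IsLevel c := hist_mem_level hh hch
      -- c ⊆ t
      have hcsubt : c ⊆ t := by
        intro y hy
        have hce : c = pot (c ∩ h) := hh c hch
        rcases mem_pot.1 (hce ▸ hy) with ⟨d, hd, hyd⟩
        have hdc : d ∈ c := (ZFSet.mem_inter.1 hd).1
        have hdh : d ∈ h := (ZFSet.mem_inter.1 hd).2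
        have hdt : d ∈ t := by
          by_contra hdt
          have : d ∈ D ∩ c := ZFSet.mem_inter.2 ⟨ZFSet.mem_sep.2 ⟨hdh, hdt⟩, hdc⟩
          rw [hmin] at this
          exact ZFSet.notMem_empty d this
        exact level_potent ht hyd hdt
      -- t ⊆ c
      have htsubc : t ⊆ c := by
        intro y hy
        obtain ⟨u, hulev, hut, hyu⟩ := mem_level_sub ht hy
        have hus : u ∈ s := hts hut
        have hIHu := IH u hus hulev
        rcases (hIHu c hclev).2 with huc | hcu
        · -- u ⊆ c
          rcases eq_or_ne u c with rfl | hne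
          · exact absurd hut hct
          · have : u ∈ c := (IH c hcs hclev u hulev).1 ⟨huc, hne⟩
            exact level_potent hclev hyu this
        · -- c ⊆ u
          rcases eq_or_ne c u with rfl | hne
          · exact absurd hut hct
          · have : c ∈ u := (hIHu c hclev).1 ⟨hcu, hne⟩
            have : c ∈ t := (level_trans ht hut) this
            exact absurd this hct
      have : t = c := ZFSet.ext fun z => ⟨fun hz => htsubc hz, fun hz => hcsubt hz⟩
      rw [this]; exact hcs
    · -- comparability
      by_cases hts : t ⊆ s
      · exact Or.inr hts
      · left
        rcases not_forall.1 hts with ⟨y, hy⟩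
        push_neg at hy
        obtain ⟨hyt, hys⟩ := hy
        obtain ⟨u, hulev, hut, hyu⟩ := mem_level_sub ht hyt
        intro x hx
        obtain ⟨r, hrlev, hrs, hxr⟩ := mem_level_sub hs hx
        rcases (IH r hrs hrlev u hulev).2 with hru | hur
        · exact level_potent ht (hxr.trans hru) hut
        · exact absurd (level_potent hs (hyu.trans hur) hrs) hys

theorem stmt6 (s t : ZFSet) (hs : IsLevel s) (ht : IsLevel t) :
    s ∈ t ∨ s = t ∨ t ∈ s := by
  rcases (main s hs t ht).2 with hst | hts
  · rcases eq_or_ne s t with rfl | hne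
    · exact Or.inr (Or.inl rfl)
    · exact Or.inl ((main t ht s hs).1 ⟨hst, hne⟩)
  · rcases eq_or_ne t s with rfl | hne
    · exact Or.inr (Or.inl rfl)
    · exact Or.inr (Or.inr ((main s hs t ht).1 ⟨hts, hne⟩))
end

section
/- If b ⊆ a then levof(b) ⊆ levof(a), and if b ∈ a then levof(b) ∈ levof(a). -/
noncomputable def levof (a : ZFSet) : ZFSet :=
  Classical.epsilon (fun s => IsLevel s ∧ a ⊆ s ∧ ∀ t, IsLevel t → a ⊆ t → t ∉ s)

namespace LevelTheory

theorem mem_pot {a x : ZFSet} : x ∈ pot a ↔ ∃ c ∈ a, x ⊆ c := by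
  constructor
  · intro hx
    exact (ZFSet.mem_sep.mp hx).2
  · rintro ⟨c, hc, hxc⟩
    refine ZFSet.mem_sep.mpr ⟨?_, c, hc, hxc⟩
    exact ZFSet.mem_powerset.mpr fun z hz => ZFSet.mem_sUnion.mpr ⟨c, hc, hxc hz⟩

theorem pot_mono {a b : ZFSet} (h : a ⊆ b) : pot a ⊆ pot b := by
  intro x hx
  obtain ⟨c, hc, hxc⟩ := mem_pot.mp hx
  exact mem_pot.mpr ⟨c, h hc, hxc⟩

theorem subset_pot (a : ZFSet) : a ⊆ pot a := fun x hx => mem_pot.mpr ⟨x, hx, fun _ h => h⟩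

/-- In a history, membership implies inclusion. -/
theorem hist_mem_subset {h : ZFSet} (hh : IsHistory h) :
    ∀ x : ZFSet, x ∈ h → ∀ y ∈ x, y ∈ h → y ⊆ x := by
  intro x
  induction x using ZFSet.inductionOn with
  | _ x IH =>
    intro hxh y hyx hyh z hzy
    -- x = pot (x ∩ h), y ∈ x, so y ⊆ c for some c ∈ x ∩ h
    obtain ⟨c, hc, hyc⟩ := mem_pot.mp ((hh x hxh) ▸ hyx)
    obtain ⟨hcx, hch⟩ := ZFSet.mem_inter.mp hc
    -- y = pot (y ∩ h), z ∈ y, so z ⊆ w for some w ∈ y ∩ h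
    obtain ⟨w, hw, hzw⟩ := mem_pot.mp ((hh y hyh) ▸ hzy)
    obtain ⟨hwy, hwh⟩ := ZFSet.mem_inter.mp hw
    have hwc : w ∈ c := hyc hwy
    have hwsc : w ⊆ c := IH c hcx hch w hwc hwh
    have : z ∈ pot (x ∩ h) := mem_pot.mpr ⟨c, hc, fun u hu => hwsc (hzw hu)⟩
    exact (hh x hxh) ▸ this

theorem hist_mem_level {h x : ZFSet} (hh : IsHistory h) (hx : x ∈ h) : IsLevel x := by
  refine ⟨x ∩ h, ?_, hh x hx⟩
  intro y hy
  obtain ⟨hyx, hyh⟩ := ZFSet.mem_inter.mp hy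
  have h1 : y = pot (y ∩ h) := hh y hyh
  have h2 : y ∩ (x ∩ h) = y ∩ h := by
    apply ZFSet.ext
    intro z
    simp only [ZFSet.mem_inter]
    constructor
    · rintro ⟨hzy, _, hzh⟩; exact ⟨hzy, hzh⟩
    · rintro ⟨hzy, hzh⟩
      exact ⟨hzy, hist_mem_subset hh x hx y hyx hyh hzy, hzh⟩
  rw [h2]; exact h1

theorem level_transitive {s : ZFSet} (hs : IsLevel s) : ∀ x ∈ s, x ⊆ s := by
  obtain ⟨h, hh, rfl⟩ := hs
  intro x hx z hz
  obtain ⟨c, hch, hxc⟩ := mem_pot.mp hx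
  have hc : c = pot (c ∩ h) := hh c hch
  obtain ⟨w, hw, hzw⟩ := mem_pot.mp (hc ▸ hxc hz)
  exact mem_pot.mpr ⟨w, (ZFSet.mem_inter.mp hw).2, hzw⟩

theorem level_potent {s : ZFSet} (hs : IsLevel s) {x c : ZFSet} (hxc : x ⊆ c) (hc : c ∈ s) :
    x ∈ s := by
  obtain ⟨h, hh, rfl⟩ := hs
  obtain ⟨d, hd, hcd⟩ := mem_pot.mp hc
  exact mem_pot.mpr ⟨d, hd, fun u hu => hcd (hxc hu)⟩

noncomputable def levs (s : ZFSet) : ZFSet := ZFSet.sep IsLevel s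

theorem mem_levs {s t : ZFSet} : t ∈ levs s ↔ t ∈ s ∧ IsLevel t := ZFSet.mem_sep

theorem level_eq_pot_levs {s : ZFSet} (hs : IsLevel s) : s = pot (levs s) := by
  obtain ⟨h, hh, rfl⟩ := hs
  apply ZFSet.ext
  intro z
  constructor
  · intro hz
    obtain ⟨c, hch, hzc⟩ := mem_pot.mp hz
    refine mem_pot.mpr ⟨c, mem_levs.mpr ⟨subset_pot h hch, hist_mem_level hh hch⟩, hzc⟩
  · intro hz
    obtain ⟨c, hc, hzc⟩ := mem_pot.mp hz
    obtain ⟨hcs, hcl⟩ := mem_levs.mp hc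
    exact level_potent ⟨h, hh, rfl⟩ hzc hcs

theorem mem_level_elim {s x : ZFSet} (hs : IsLevel s) (hx : x ∈ s) :
    ∃ c, IsLevel c ∧ c ∈ s ∧ x ⊆ c := by
  have := level_eq_pot_levs hs ▸ hx
  obtain ⟨c, hc, hxc⟩ := mem_pot.mp this
  obtain ⟨hcs, hcl⟩ := mem_levs.mp hc
  exact ⟨c, hcl, hcs, hxc⟩

theorem levs_history {s : ZFSet} (hs : IsLevel s) : IsHistory (levs s) := by
  intro t ht
  obtain ⟨hts, htl⟩ := mem_levs.mp ht
  have h1 : t = pot (levs t) := level_eq_pot_levs htl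
  have h2 : t ∩ levs s = levs t := by
    apply ZFSet.ext
    intro u
    simp only [ZFSet.mem_inter, mem_levs]
    constructor
    · rintro ⟨hut, _, hul⟩; exact ⟨hut, hul⟩
    · rintro ⟨hut, hul⟩
      exact ⟨hut, level_transitive hs t hts hut, hul⟩
  rw [h2]; exact h1

/-- Comparability of levels. -/
theorem level_comp : ∀ s : ZFSet, IsLevel s → ∀ t : ZFSet, IsLevel t → s ∈ t ∨ t ⊆ s := by
  intro s
  induction s using ZFSet.inductionOn with
  | _ s IHs =>
    intro hs t
    induction t using ZFSet.inductionOn with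
    | _ t IHt =>
      intro ht
      by_cases hst : s ∈ t
      · exact Or.inl hst
      · right
        intro x hxt
        obtain ⟨d, hdl, hdt, hxd⟩ := mem_level_elim ht hxt
        rcases IHt d hdt hdl with hsd | hds
        · exact absurd (level_transitive ht d hdt hsd) hst
        · -- d ⊆ s
          by_cases hds' : d = s
          · exact absurd (hds' ▸ hdt) hst
          · -- d ⊊ s : find y ∈ s \ d
            have : ∃ y ∈ s, y ∉ d := by
              by_contra hcon
              push_neg at hcon
              exact hds' (ZFSet.ext fun z => ⟨fun hz => hds hz, fun hz => hcon z hz⟩)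
            obtain ⟨y, hys, hyd⟩ := this
            obtain ⟨c, hcl, hcs, hyc⟩ := mem_level_elim hs hys
            rcases IHs c hcs hcl d hdl with hcd | hdc
            · exact absurd (level_potent hdl hyc hcd) hyd
            · -- d ⊆ c, c ∈ s so d ∈ s, and x ⊆ d so x ∈ s
              exact level_potent hs hxd (level_potent hs hdc hcs)

theorem level_tri {s t : ZFSet} (hs : IsLevel s) (ht : IsLevel t) :
    s ∈ t ∨ s = t ∨ t ∈ s := by
  rcases level_comp s hs t ht with h1 | h1
  · exact Or.inl h1
  rcases level_comp t ht s hs with h2 | h2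
  · exact Or.inr (Or.inr h2)
  · exact Or.inr (Or.inl (ZFSet.ext fun z => ⟨fun hz => h2 hz, fun hz => h1 hz⟩))

/-- Every set is included in some level. -/
theorem exists_level (a : ZFSet) : ∃ s, IsLevel s ∧ a ⊆ s := by
  induction a using ZFSet.inductionOn with
  | _ a IH =>
    classical
    let f : ZFSet → ZFSet := fun x => Classical.epsilon (fun s => IsLevel s ∧ x ⊆ s)
    have hf : ∀ x ∈ a, IsLevel (f x) ∧ x ⊆ f x := fun x hx =>
      Classical.epsilon_spec (IH x hx)
    letI : ZFSet.Definable₁ (fun x => insert (f x) (levs (f x))) :=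
      Classical.allZFSetDefinable _
    let h : ZFSet := ZFSet.sUnion (ZFSet.image (fun x => insert (f x) (levs (f x))) a)
    have hmem : ∀ t, t ∈ h ↔ ∃ x ∈ a, t = f x ∨ t ∈ levs (f x) := by
      intro t
      simp only [h, ZFSet.mem_sUnion, ZFSet.mem_image]
      constructor
      · rintro ⟨z, ⟨x, hx, rfl⟩, hz⟩
        rcases ZFSet.mem_insert_iff.mp hz with h' | h'
        · exact ⟨x, hx, Or.inl h'⟩
        · exact ⟨x, hx, Or.inr h'⟩
      · rintro ⟨x, hx, h' | h'⟩
        · exact ⟨_, ⟨x, hx, rfl⟩, ZFSet.mem_insert_iff.mpr (Or.inl h')⟩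
        · exact ⟨_, ⟨x, hx, rfl⟩, ZFSet.mem_insert_iff.mpr (Or.inr h')⟩
    have hlev : ∀ t ∈ h, IsLevel t := by
      intro t ht
      obtain ⟨x, hx, h' | h'⟩ := (hmem t).mp ht
      · exact h' ▸ (hf x hx).1
      · exact (mem_levs.mp h').2
    have hdown : ∀ t ∈ h, levs t ⊆ h := by
      intro t ht u hu
      obtain ⟨hut, hul⟩ := mem_levs.mp hu
      obtain ⟨x, hx, h' | h'⟩ := (hmem t).mp ht
      · exact (hmem u).mpr ⟨x, hx, Or.inr (h' ▸ mem_levs.mpr ⟨h' ▸ hut, hul⟩)⟩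
      · obtain ⟨hts, htl⟩ := mem_levs.mp h'
        have : u ∈ f x := level_transitive (hf x hx).1 t hts hut
        exact (hmem u).mpr ⟨x, hx, Or.inr (mem_levs.mpr ⟨this, hul⟩)⟩
    have hhist : IsHistory h := by
      intro t ht
      have htl := hlev t ht
      have h2 : t ∩ h = levs t := by
        apply ZFSet.ext
        intro u
        simp only [ZFSet.mem_inter, mem_levs]
        constructor
        · rintro ⟨hut, huh⟩; exact ⟨hut, hlev u huh⟩
        · rintro ⟨hut, hul⟩; exact ⟨hut, hdown t ht (mem_levs.mpr ⟨hut, hul⟩)⟩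
      rw [h2]; exact level_eq_pot_levs htl
    refine ⟨pot h, ⟨h, hhist, rfl⟩, ?_⟩
    intro x hx
    refine mem_pot.mpr ⟨f x, (hmem (f x)).mpr ⟨x, hx, Or.inl rfl⟩, (hf x hx).2⟩

theorem exists_least_level (a : ZFSet) :
    ∃ s, IsLevel s ∧ a ⊆ s ∧ ∀ t, IsLevel t → a ⊆ t → t ∉ s := by
  obtain ⟨s0, hs0, has0⟩ := exists_level a
  let S : ZFSet := insert s0 (ZFSet.sep (fun t => IsLevel t ∧ a ⊆ t) s0)
  have hS : ∀ t, t ∈ S ↔ (t = s0 ∨ t ∈ s0) ∧ IsLevel t ∧ a ⊆ t := by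
    intro t
    simp only [S, ZFSet.mem_insert_iff, ZFSet.mem_sep]
    constructor
    · rintro (rfl | ⟨h1, h2⟩)
      · exact ⟨Or.inl rfl, hs0, has0⟩
      · exact ⟨Or.inr h1, h2⟩
    · rintro ⟨rfl | h1, h2⟩
      · exact Or.inl rfl
      · exact Or.inr ⟨h1, h2⟩
  have hne : S ≠ ∅ := by
    intro hem
    have : s0 ∈ S := (hS s0).mpr ⟨Or.inl rfl, hs0, has0⟩
    rw [hem] at this
    exact ZFSet.notMem_empty s0 this
  obtain ⟨m, hmS, hmin⟩ := ZFSet.regularity S hne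
  obtain ⟨hm0, hml, ham⟩ := (hS m).mp hmS
  refine ⟨m, hml, ham, ?_⟩
  intro t htl hat htm
  have hts0 : t ∈ s0 := by
    rcases hm0 with rfl | hm0
    · exact htm
    · exact level_transitive hs0 m hm0 htm
  have htS : t ∈ S := (hS t).mpr ⟨Or.inr hts0, htl, hat⟩
  have : t ∈ S ∩ m := ZFSet.mem_inter.mpr ⟨htS, htm⟩
  rw [hmin] at this
  exact ZFSet.notMem_empty t this

theorem levof_spec (a : ZFSet) :
    IsLevel (levof a) ∧ a ⊆ levof a ∧ ∀ t, IsLevel t → a ⊆ t → t ∉ levof a :=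
  Classical.epsilon_spec (exists_least_level a)

end LevelTheory

theorem stmt11 (a b : ZFSet) :
    (b ⊆ a → levof b ⊆ levof a) ∧ (b ∈ a → levof b ∈ levof a) := by
  open LevelTheory in
  obtain ⟨hla, hsa, hmina⟩ := LevelTheory.levof_spec a
  obtain ⟨hlb, hsb, hminb⟩ := LevelTheory.levof_spec b
  constructor
  · intro hba
    rcases LevelTheory.level_tri hla hlb with h | h | h
    · exact absurd h (hminb (levof a) hla (fun z hz => hsa (hba hz)))
    · exact h ▸ fun z hz => hz
    · exact LevelTheory.level_transitive hla (levof b) h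
  · intro hba
    have hbla : b ∈ levof a := hsa hba
    obtain ⟨c, hcl, hcs, hbc⟩ := LevelTheory.mem_level_elim hla hbla
    rcases LevelTheory.level_tri hlb hcl with h | h | h
    · exact LevelTheory.level_transitive hla c hcs h
    · exact h ▸ hcs
    · exact absurd h (hminb c hcl hbc)
end

section
/- For any set a, pot(a) ∉ a. -/
theorem stmt13 (a : ZFSet) : pot a ∉ a := by
  intro h
  set d := ZFSet.sep (fun x => x ∉ x) (pot a) with hd
  have hdsub : d ⊆ pot a := fun x hx => (ZFSet.mem_sep.mp hx).1
  have hdmem : d ∈ pot a := by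
    rw [pot, ZFSet.mem_sep]
    refine ⟨ZFSet.mem_powerset.mpr ?_, pot a, h, hdsub⟩
    intro x hx
    exact ZFSet.mem_sUnion.mpr ⟨pot a, h, hdsub hx⟩
  by_cases hdd : d ∈ d
  · exact (ZFSet.mem_sep.mp hdd).2 hdd
  · exact hdd (ZFSet.mem_sep.mpr ⟨hdmem, hdd⟩)
end

section
/- Define the interpreted membership x ∈° a to mean (coinj(x) ∈ a ↔ ∅ ∉ a). Then interpreted Extensionality holds: for all sets a, b, if for every x, x ∈° a ↔ x ∈° b, then a = b. -/
inductive IsZermelo : ZFSet → Prop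
  | zero : IsZermelo ∅
  | succ {n : ZFSet} : IsZermelo n → IsZermelo {n}

noncomputable def coinj (a : ZFSet) : ZFSet :=
  letI := Classical.propDecidable (IsZermelo a)
  if IsZermelo a then {a} else a

def memCo (x a : ZFSet) : Prop := coinj x ∈ a ↔ ∅ ∉ a

lemma coinj_notMem (a : ZFSet) : coinj a ∉ a := by
  unfold coinj
  split
  · intro hmem
    exact ZFSet.mem_asymm (ZFSet.mem_singleton.mpr rfl) hmem
  · exact ZFSet.mem_irrefl a

lemma coinj_surj {y : ZFSet} (hy : y ≠ ∅) : ∃ x, coinj x = y := by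
  by_cases hz : IsZermelo y
  · cases hz with
    | zero => exact absurd rfl hy
    | @succ n hn => exact ⟨n, by unfold coinj; rw [if_pos hn]⟩
  · exact ⟨y, by unfold coinj; rw [if_neg hz]⟩

theorem stmt18 (a b : ZFSet) (h : ∀ x, memCo x a ↔ memCo x b) : a = b := by
  unfold memCo at h
  by_cases ha : ∅ ∈ a <;> by_cases hb : ∅ ∈ b
  · -- ∅ ∈ a, ∅ ∈ b
    have key : ∀ x, coinj x ∈ a ↔ coinj x ∈ b := fun x => by have := h x; tauto
    ext y
    constructor <;> intro hy
    · by_cases hy0 : y = ∅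
      · subst hy0; exact hb
      · obtain ⟨x, rfl⟩ := coinj_surj hy0; exact (key x).mp hy
    · by_cases hy0 : y = ∅
      · subst hy0; exact ha
      · obtain ⟨x, rfl⟩ := coinj_surj hy0; exact (key x).mpr hy
  · -- ∅ ∈ a, ∅ ∉ b : contradiction
    exfalso
    have hane : a ≠ ∅ := fun h' => by rw [h'] at ha; exact ZFSet.mem_irrefl ∅ ha
    obtain ⟨x1, hx1⟩ := coinj_surj hane
    have hab : a ∈ b := by
      have := h x1; rw [hx1] at this
      have hL : a ∈ a ↔ ∅ ∉ a := iff_of_false (ZFSet.mem_irrefl a) (fun h' => h' ha)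
      exact (this.mp hL).mpr hb
    have hbne : b ≠ ∅ := fun h' => by rw [h'] at hab; exact (ZFSet.notMem_empty a) hab
    obtain ⟨x2, hx2⟩ := coinj_surj hbne
    have hba : b ∈ a := by
      have := h x2; rw [hx2] at this
      have hR : ¬(b ∈ b ↔ ∅ ∉ b) := fun h' => ZFSet.mem_irrefl b (h'.mpr hb)
      by_contra hba
      exact hR (this.mp (iff_of_false hba (fun h' => h' ha)))
    exact ZFSet.mem_asymm hab hba
  · -- ∅ ∉ a, ∅ ∈ b : symmetric contradiction
    exfalso
    have hbne : b ≠ ∅ := fun h' => by rw [h'] at hb; exact ZFSet.mem_irrefl ∅ hb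
    obtain ⟨x1, hx1⟩ := coinj_surj hbne
    have hba : b ∈ a := by
      have := h x1; rw [hx1] at this
      have hR : b ∈ b ↔ ∅ ∉ b := iff_of_false (ZFSet.mem_irrefl b) (fun h' => h' hb)
      exact (this.mpr hR).mpr ha
    have hane : a ≠ ∅ := fun h' => by rw [h'] at hba; exact (ZFSet.notMem_empty b) hba
    obtain ⟨x2, hx2⟩ := coinj_surj hane
    have hab : a ∈ b := by
      have := h x2; rw [hx2] at this
      have hL : ¬(a ∈ a ↔ ∅ ∉ a) := fun h' => ZFSet.mem_irrefl a (h'.mpr ha)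
      by_contra hab
      exact hL (this.mpr (iff_of_false hab (fun h' => h' hb)))
    exact ZFSet.mem_asymm hab hba
  · -- ∅ ∉ a, ∅ ∉ b
    have key : ∀ x, coinj x ∈ a ↔ coinj x ∈ b := fun x => by have := h x; tauto
    ext y
    constructor <;> intro hy
    · have hy0 : y ≠ ∅ := fun h' => ha (h' ▸ hy)
      obtain ⟨x, rfl⟩ := coinj_surj hy0; exact (key x).mp hy
    · have hy0 : y ≠ ∅ := fun h' => hb (h' ▸ hy)
      obtain ⟨x, rfl⟩ := coinj_surj hy0; exact (key x).mpr hy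
end

section
/- Define the interpreted complement of a by cocomp(a) = a ∪ {∅} if ∅ ∉ a, and cocomp(a) = a \ {∅} if ∅ ∈ a. Then for all sets a and x: x ∈° a if and only if ¬(x ∈° cocomp(a)); moreover ¬(a ∈° a) if and only if cocomp(a) ∈° cocomp(a). -/
noncomputable def cocomp (a : ZFSet) : ZFSet :=
  letI := Classical.propDecidable ((∅ : ZFSet) ∈ a)
  if (∅ : ZFSet) ∈ a then a \ {∅} else a ∪ {∅}

theorem stmt19 :
    (∀ a x : ZFSet, memCo x a ↔ ¬ memCo x (cocomp a)) ∧
    (∀ a : ZFSet, ¬ memCo a a ↔ memCo (cocomp a) (cocomp a)) := by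
  have hne : ∀ x : ZFSet, coinj x ≠ ∅ := by
    intro x
    unfold coinj
    split
    · intro h
      exact ZFSet.notMem_empty x (h ▸ ZFSet.mem_singleton.2 rfl)
    · rename_i h
      intro he
      exact h (he ▸ IsZermelo.zero)
  have hnm : ∀ a : ZFSet, coinj a ∉ a := by
    intro a
    unfold coinj
    split
    · intro h
      exact ZFSet.mem_asymm h (ZFSet.mem_singleton.2 rfl)
    · exact ZFSet.mem_irrefl a
  have key : ∀ a x : ZFSet, memCo x a ↔ ¬ memCo x (cocomp a) := by
    intro a x
    unfold memCo cocomp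
    split <;> rename_i h <;>
      simp [ZFSet.mem_sdiff, ZFSet.mem_union, ZFSet.mem_singleton, hne x, h] <;> tauto
  refine ⟨key, fun a => ?_⟩
  have h1 : memCo a a ↔ ∅ ∈ a := by
    unfold memCo
    have := hnm a
    tauto
  have h2 : memCo (cocomp a) (cocomp a) ↔ ∅ ∈ cocomp a := by
    unfold memCo
    have := hnm (cocomp a)
    tauto
  have h3 : (∅ ∈ cocomp a) ↔ ∅ ∉ a := by
    unfold cocomp
    split <;> rename_i h <;>
      simp [ZFSet.mem_sdiff, ZFSet.mem_union, ZFSet.mem_singleton, h]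
  rw [h1, h2, h3]
end
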